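/- Let Σ = (X, 𝒟, φ) be a robustly forward complete abstract dynamical system with 0 a robust equilibrium point. If there exists a non-coercive Lyapunov function V for Σ (continuous V : X → [0,∞), V(0) = 0, 0 < V(x) ≤ ψ₂(‖x‖) for x ≠ 0 with ψ₂ ∈ K∞, and Dini derivative V̇_d(x) ≤ −α(‖x‖) for some α ∈ K and all x, d), then there exists β ∈ KL such that ‖φ(t,x,d)‖ ≤ β(‖x‖, t) for all x ∈ X, d ∈ 𝒟, t ≥ 0 (i.e., 0 is uniformly globally asymptotically stable). -/

import Mathlib

open Filter Set

/-- Class `K` comparison functions on `[0,∞)`. -/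
def ClassK (f : ℝ → ℝ) : Prop :=
  ContinuousOn f (Ici 0) ∧ StrictMonoOn f (Ici 0) ∧ f 0 = 0 ∧ ∀ r, 0 ≤ r → 0 ≤ f r

/-- Class `K∞` comparison functions. -/
def ClassKInf (f : ℝ → ℝ) : Prop :=
  ClassK f ∧ ∀ M : ℝ, ∃ r, 0 ≤ r ∧ M < f r

/-- Class `KL` comparison functions. -/
def ClassKL (β : ℝ → ℝ → ℝ) : Prop :=
  (∀ t, 0 ≤ t → ClassK (fun r => β r t)) ∧
  ∀ r, 0 < r → ContinuousOn (β r) (Ici 0) ∧ AntitoneOn (β r) (Ici 0) ∧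
    Tendsto (β r) atTop (nhds 0)

/-- Right-hand lower Dini derivative. -/
noncomputable def dini (f : ℝ → ℝ) (t : ℝ) : ℝ :=
  liminf (fun τ => (f (t + τ) - f t) / τ) (nhdsWithin 0 (Ioi 0))

/-- An abstract forward-complete dynamical system with disturbances. -/
structure DynSys (X : Type*) [NormedAddCommGroup X] (D : Type*) where
  /-- time shift on disturbances -/
  shift : ℝ → D → D
  /-- transition map -/
  phi : ℝ → X → D → X
  identity : ∀ x d, phi 0 x d = x
  cont : ∀ x d, ContinuousOn (fun t => phi t x d) (Ici 0)
  cocycle : ∀ t h x d, 0 ≤ t → 0 ≤ h →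
    phi h (phi t x d) (shift t d) = phi (t + h) x d

/-- Robust forward completeness. -/
def DynSys.RFC {X D : Type*} [NormedAddCommGroup X] (S : DynSys X D) : Prop :=
  ∀ C > (0:ℝ), ∀ τ > (0:ℝ), ∃ B : ℝ, ∀ (x : X) (d : D) (t : ℝ),
    ‖x‖ ≤ C → 0 ≤ t → t ≤ τ → ‖S.phi t x d‖ ≤ B

/-- `0` is an equilibrium point. -/
def DynSys.Equilibrium {X D : Type*} [NormedAddCommGroup X] (S : DynSys X D) : Prop :=
  ∀ (t : ℝ) (d : D), 0 ≤ t → S.phi t 0 d = 0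

/-- `0` is a robust equilibrium point. -/
def DynSys.REP {X D : Type*} [NormedAddCommGroup X] (S : DynSys X D) : Prop :=
  S.Equilibrium ∧ ∀ ε > (0:ℝ), ∀ h > (0:ℝ), ∃ δ > (0:ℝ), ∀ (t : ℝ) (x : X) (d : D),
    0 ≤ t → t ≤ h → ‖x‖ ≤ δ → ‖S.phi t x d‖ ≤ ε


lemma map_addLeft_nhdsGT (t : ℝ) :
    Filter.map (fun τ => t + τ) (nhdsWithin (0:ℝ) (Ioi 0)) = nhdsWithin t (Ioi t) := by
  have h := (Homeomorph.addLeft t).isEmbedding.map_nhdsWithin_eq (Ioi (0:ℝ)) 0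
  simpa [Homeomorph.addLeft, image_const_add_Ioi] using h

lemma dini_eq_liminf_slope (f : ℝ → ℝ) (t : ℝ) :
    dini f t = liminf (slope f t) (nhdsWithin t (Ioi t)) := by
  rw [← map_addLeft_nhdsGT t, ← Filter.liminf_comp]
  apply Filter.liminf_congr
  filter_upwards [self_mem_nhdsWithin] with τ (hτ : 0 < τ)
  simp [Function.comp, slope_def_field]

/-- From `dini f t ≤ L < r` (with `L < 0` guarding junk values) get frequently small slopes. -/
lemma frequently_slope_lt {f : ℝ → ℝ} {t L r : ℝ} (hL : L < 0)
    (h : dini f t ≤ L) (hr : L < r) :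
    ∃ᶠ z in nhdsWithin t (Ioi t), slope f t z < r := by
  rw [dini_eq_liminf_slope] at h
  by_contra hcon
  rw [Filter.not_frequently] at hcon
  have hev : ∀ᶠ z in nhdsWithin t (Ioi t), r ≤ slope f t z := by
    filter_upwards [hcon] with z hz; exact not_lt.1 hz
  -- the set of eventual lower bounds
  by_cases hb : BddAbove {a : ℝ | ∀ᶠ z in nhdsWithin t (Ioi t), a ≤ slope f t z}
  · have : r ≤ liminf (slope f t) (nhdsWithin t (Ioi t)) := by
      apply le_csSup hb
      exact hev
    linarith [le_trans this h]
  · have : liminf (slope f t) (nhdsWithin t (Ioi t)) = 0 := by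
      unfold Filter.liminf Filter.limsInf
      exact Real.sSup_of_not_bddAbove hb
    rw [this] at h; linarith

-- chunk 2: trajectory lemmas
section Traj

variable {X D : Type*} [NormedAddCommGroup X] (S : DynSys X D)
variable {V : X → ℝ} {α : ℝ → ℝ}

/-- Transfer of the Dini decrease condition along the flow. -/
lemma dini_traj (hdec : ∀ (x : X) (d : D), dini (fun t => V (S.phi t x d)) 0 ≤ -α ‖x‖)
    (x : X) (d : D) {t : ℝ} (ht : 0 ≤ t) :
    dini (fun s => V (S.phi s x d)) t ≤ -α ‖S.phi t x d‖ := by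
  set y := S.phi t x d with hy
  have h1 : dini (fun s => V (S.phi s x d)) t
      = dini (fun s => V (S.phi s y (S.shift t d))) 0 := by
    unfold dini
    apply Filter.liminf_congr
    filter_upwards [self_mem_nhdsWithin] with τ (hτ : 0 < τ)
    have e1 : S.phi (t + τ) x d = S.phi τ y (S.shift t d) :=
      (S.cocycle t τ x d ht hτ.le).symm
    have e2 : S.phi (0 + τ) y (S.shift t d) = S.phi τ y (S.shift t d) := by
      rw [zero_add]
    have e3 : S.phi 0 y (S.shift t d) = y := S.identity _ _
    rw [e1, e2, e3, ← hy]
  rw [h1]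
  exact hdec y (S.shift t d)

/-- Key frequent-small-slope property along trajectories. -/
lemma freq_slope (hα : ClassK α)
    (heq : S.Equilibrium) (hV0 : V 0 = 0)
    (hdec : ∀ (x : X) (d : D), dini (fun t => V (S.phi t x d)) 0 ≤ -α ‖x‖)
    (x : X) (d : D) {t r : ℝ} (ht : 0 ≤ t) (hr : -α ‖S.phi t x d‖ < r) :
    ∃ᶠ z in nhdsWithin t (Ioi t), slope (fun s => V (S.phi s x d)) t z < r := by
  by_cases hy : S.phi t x d = 0
  · -- trajectory has reached the equilibrium: stays there
    have hr0 : 0 < r := by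
      have h0 : α 0 = 0 := hα.2.2.1
      rw [hy] at hr; rw [norm_zero, h0] at hr; linarith
    have : ∀ z ∈ Ioi t, slope (fun s => V (S.phi s x d)) t z < r := by
      intro z hz
      have hz' : t < z := hz
      have : S.phi z x d = 0 := by
        have := S.cocycle t (z - t) x d ht (by linarith)
        rw [hy] at this
        rw [show z = t + (z - t) by ring, ← this, heq (z - t) _ (by linarith)]
      rw [slope_def_field, this, hy, hV0]
      simp [hr0]
    have hne : (nhdsWithin t (Ioi t)).NeBot := nhdsGT_neBot t
    apply Filter.Eventually.frequently
    filter_upwards [self_mem_nhdsWithin] with z hz using this z hz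
  · -- strict decrease case
    have hαpos : 0 < α ‖S.phi t x d‖ := by
      have h0 : (0:ℝ) < ‖S.phi t x d‖ := norm_pos_iff.2 hy
      calc (0:ℝ) = α 0 := hα.2.2.1.symm
        _ < α ‖S.phi t x d‖ := hα.2.1 (self_mem_Ici) (norm_nonneg _) h0
    exact frequently_slope_lt (by linarith) (dini_traj S hdec x d ht) hr

/-- Quantitative decrease lemma. -/
lemma decrease (hα : ClassK α) (hVc : Continuous V)
    (heq : S.Equilibrium) (hV0 : V 0 = 0)
    (hdec : ∀ (x : X) (d : D), dini (fun t => V (S.phi t x d)) 0 ≤ -α ‖x‖)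
    (x : X) (d : D) {a b c : ℝ} (h0a : 0 ≤ a) (hab : a ≤ b) (hc : 0 ≤ c)
    (hbd : ∀ s ∈ Icc a b, c ≤ α ‖S.phi s x d‖) :
    V (S.phi b x d) ≤ V (S.phi a x d) - c * (b - a) := by
  set f : ℝ → ℝ := fun s => V (S.phi s x d) with hf
  have hcont : ContinuousOn f (Icc a b) :=
    hVc.comp_continuousOn ((S.cont x d).mono (fun s hs => le_trans h0a hs.1))
  have key := image_le_of_liminf_slope_right_le_deriv_boundary (f := f) (a := a) (b := b)
    (B := fun s => f a - c * (s - a)) (B' := fun _ => -c) hcont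
    (by simp)
    (by fun_prop)
    (by
      intro s hs
      have := (((hasDerivWithinAt_id s (Ici s)).sub_const a).const_mul c).const_sub (f a)
      simpa using this)
    (by
      intro s hs rr hrr
      have hrr' : -c < rr := hrr
      apply freq_slope S hα heq hV0 hdec x d (le_trans h0a hs.1)
      have := hbd s ⟨hs.1, hs.2.le⟩
      linarith)
  have := key (right_mem_Icc.2 hab)
  simpa [hf] using this

end Traj

-- chunk 3: UGATT, stability, boundedness
section Att

variable {X D : Type*} [NormedAddCommGroup X] (S : DynSys X D)
variable {V : X → ℝ} {ψ₂ α : ℝ → ℝ}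

lemma V_nonneg (hV0 : V 0 = 0) (hpos : ∀ x : X, x ≠ 0 → 0 < V x) (x : X) : 0 ≤ V x := by
  by_cases hx : x = 0
  · rw [hx, hV0]
  · exact (hpos x hx).le

/-- V is nonincreasing along trajectories. -/
lemma V_mono (hα : ClassK α) (hVc : Continuous V)
    (heq : S.Equilibrium) (hV0 : V 0 = 0)
    (hdec : ∀ (x : X) (d : D), dini (fun t => V (S.phi t x d)) 0 ≤ -α ‖x‖)
    (x : X) (d : D) {a b : ℝ} (h0a : 0 ≤ a) (hab : a ≤ b) :
    V (S.phi b x d) ≤ V (S.phi a x d) := by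
  have := decrease S hα hVc heq hV0 hdec x d (c := 0) h0a hab le_rfl
    (fun s _ => hα.2.2.2 _ (norm_nonneg _))
  linarith

/-- Uniform global attractivity with explicit reaching-time structure. -/
lemma UGATT (hREP : S.REP)
    (hVc : Continuous V) (hV0 : V 0 = 0)
    (hψ₂ : ClassKInf ψ₂) (hα : ClassK α)
    (hpos : ∀ x : X, x ≠ 0 → 0 < V x)
    (hub : ∀ x : X, V x ≤ ψ₂ ‖x‖)
    (hdec : ∀ (x : X) (d : D), dini (fun t => V (S.phi t x d)) 0 ≤ -α ‖x‖) :
    ∀ ε > (0:ℝ), ∃ θ > (0:ℝ), ∀ r, 0 ≤ r → ∀ (x : X) (d : D) (t : ℝ),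
      ‖x‖ ≤ r → ψ₂ r / θ + 1 ≤ t → ‖S.phi t x d‖ ≤ ε := by
  intro ε hε
  obtain ⟨δ₁, hδ₁, P₁⟩ := hREP.2 ε hε 1 one_pos
  set c := α δ₁ with hcdef
  have hc : 0 < c := by
    calc (0:ℝ) = α 0 := hα.2.2.1.symm
      _ < α δ₁ := hα.2.1 self_mem_Ici (mem_Ici.2 hδ₁.le) hδ₁
  -- small norm gives small V
  obtain ⟨δ₂, hδ₂, Q⟩ := Metric.continuousAt_iff.1 hVc.continuousAt c hc
  have Q' : ∀ y : X, ‖y‖ ≤ δ₂ / 2 → V y < c := by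
    intro y hy
    have : dist y 0 < δ₂ := by
      rw [dist_zero_right]; linarith
    have := Q this
    rw [hV0, dist_zero_right] at this
    exact lt_of_le_of_lt (le_abs_self _) this
  set θ := α (δ₂ / 2) with hθdef
  have hθ : 0 < θ := by
    calc (0:ℝ) = α 0 := hα.2.2.1.symm
      _ < α (δ₂ / 2) := hα.2.1 self_mem_Ici (mem_Ici.2 (by linarith)) (by linarith)
  refine ⟨θ, hθ, ?_⟩
  intro r hr x d t hxr ht
  have hψr : 0 ≤ ψ₂ r := hψ₂.1.2.2.2 r hr
  have ht1 : ψ₂ r / θ ≤ t - 1 := by linarith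
  have ht0 : (0:ℝ) ≤ t - 1 := le_trans (by positivity) ht1
  have hVx : V x ≤ ψ₂ r := by
    refine le_trans (hub x) ?_
    rcases eq_or_lt_of_le hxr with h2|h2
    · rw [h2]
    · exact (hψ₂.1.2.1 (mem_Ici.2 (norm_nonneg x)) (mem_Ici.2 hr) h2).le
  -- Step 1: V gets below c by time t-1
  have step1 : ∃ s, s ∈ Icc 0 (t-1) ∧ V (S.phi s x d) < c := by
    by_contra hcon
    push_neg at hcon
    have hbd : ∀ s ∈ Icc (0:ℝ) (t-1), θ ≤ α ‖S.phi s x d‖ := by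
      intro s hs
      have hVs := hcon s hs
      have hn : δ₂ / 2 < ‖S.phi s x d‖ := by
        by_contra hn
        push_neg at hn
        exact absurd (Q' _ hn) (not_lt.2 hVs)
      exact hα.2.1.monotoneOn (mem_Ici.2 (by linarith)) (mem_Ici.2 (by positivity)) hn.le
    have hdecr := decrease S hα hVc hREP.1 hV0 hdec x d (a := 0) (b := t-1)
      le_rfl ht0 hθ.le hbd
    rw [S.identity] at hdecr
    have hend := hcon (t-1) ⟨ht0, le_rfl⟩
    have : θ * (t - 1) ≥ ψ₂ r := by
      rw [ge_iff_le, ← div_le_iff₀' hθ]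
      linarith [ht1]
    linarith
  obtain ⟨s₀, hs₀, hVs₀⟩ := step1
  -- Step 2
  have step2 : V (S.phi (t-1) x d) < c :=
    lt_of_le_of_lt (V_mono S hα hVc hREP.1 hV0 hdec x d hs₀.1 hs₀.2) hVs₀
  -- Step 3: trajectory enters the δ₁ ball in [t-1, t]
  have step3 : ∃ u, u ∈ Icc (t-1) t ∧ ‖S.phi u x d‖ < δ₁ := by
    by_contra hcon
    push_neg at hcon
    have hbd : ∀ s ∈ Icc (t-1) t, c ≤ α ‖S.phi s x d‖ := by
      intro s hs
      exact hα.2.1.monotoneOn (mem_Ici.2 hδ₁.le)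
        (mem_Ici.2 (le_trans hδ₁.le (hcon s hs))) (hcon s hs)
    have hdecr := decrease S hα hVc hREP.1 hV0 hdec x d (a := t-1) (b := t)
      ht0 (by linarith) hc.le hbd
    have hVnn := V_nonneg (V := V) hV0 hpos (S.phi t x d)
    have : c * (t - (t-1)) = c := by ring_nf
    nlinarith [step2, hdecr, hVnn]
  obtain ⟨u, hu, hnu⟩ := step3
  -- Step 4: conclude via REP on window of length ≤ 1
  have hu0 : 0 ≤ u := le_trans ht0 hu.1
  have hco := S.cocycle u (t - u) x d hu0 (by linarith [hu.2])
  rw [show u + (t - u) = t by ring] at hco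
  rw [← hco]
  exact P₁ (t - u) (S.phi u x d) (S.shift u d) (by linarith [hu.2]) (by linarith [hu.1]) hnu.le

/-- Uniform stability. -/
lemma stab (hREP : S.REP)
    (hVc : Continuous V) (hV0 : V 0 = 0)
    (hψ₂ : ClassKInf ψ₂) (hα : ClassK α)
    (hpos : ∀ x : X, x ≠ 0 → 0 < V x)
    (hub : ∀ x : X, V x ≤ ψ₂ ‖x‖)
    (hdec : ∀ (x : X) (d : D), dini (fun t => V (S.phi t x d)) 0 ≤ -α ‖x‖) :
    ∀ ε > (0:ℝ), ∃ δ > (0:ℝ), ∀ (x : X) (d : D) (t : ℝ),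
      0 ≤ t → ‖x‖ ≤ δ → ‖S.phi t x d‖ ≤ ε := by
  intro ε hε
  obtain ⟨θ, hθ, hU⟩ := UGATT S hREP hVc hV0 hψ₂ hα hpos hub hdec ε hε
  set T₁ := ψ₂ 1 / θ + 1 with hT₁
  have hT₁pos : 0 < T₁ := by
    have : 0 ≤ ψ₂ 1 := hψ₂.1.2.2.2 1 zero_le_one
    positivity
  obtain ⟨δ', hδ', P⟩ := hREP.2 ε hε T₁ hT₁pos
  refine ⟨min δ' 1, by positivity, ?_⟩
  intro x d t ht hx
  rcases le_or_gt t T₁ with h|h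
  · exact P t x d ht h (le_trans hx (min_le_left _ _))
  · exact hU 1 zero_le_one x d t (le_trans hx (min_le_right _ _)) h.le

/-- Uniform boundedness on each ball. -/
lemma bdd (hRFC : S.RFC) (hREP : S.REP)
    (hVc : Continuous V) (hV0 : V 0 = 0)
    (hψ₂ : ClassKInf ψ₂) (hα : ClassK α)
    (hpos : ∀ x : X, x ≠ 0 → 0 < V x)
    (hub : ∀ x : X, V x ≤ ψ₂ ‖x‖)
    (hdec : ∀ (x : X) (d : D), dini (fun t => V (S.phi t x d)) 0 ≤ -α ‖x‖) :
    ∀ r : ℝ, 0 < r → ∃ G : ℝ, 0 ≤ G ∧ ∀ (x : X) (d : D) (t : ℝ),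
      0 ≤ t → ‖x‖ ≤ r → ‖S.phi t x d‖ ≤ G := by
  intro r hr
  obtain ⟨θ, hθ, hU⟩ := UGATT S hREP hVc hV0 hψ₂ hα hpos hub hdec 1 one_pos
  set T := ψ₂ r / θ + 1 with hT
  have hTpos : 0 < T := by
    have : 0 ≤ ψ₂ r := hψ₂.1.2.2.2 r hr.le
    positivity
  obtain ⟨B, hB⟩ := hRFC r hr T hTpos
  refine ⟨max B 1, le_trans zero_le_one (le_max_right _ _), ?_⟩
  intro x d t ht hx
  rcases le_or_gt t T with h|h
  · exact le_trans (hB x d t hx ht h) (le_max_left _ _)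
  · exact le_trans (hU r hr.le x d t hx h.le) (le_max_right _ _)

end Att

-- chunk 4: KL construction
section KL

open intervalIntegral Real

/-- Build a `KL` majorant from a two-parameter envelope with the right monotonicity,
stability and attractivity properties. -/
lemma KL_construction (h : ℝ → ℝ → ℝ)
    (h0 : ∀ r t, 0 ≤ h r t)
    (hmr : ∀ t, Monotone fun r => h r t)
    (hat : ∀ r, Antitone (h r))
    (hneg : ∀ r t, t ≤ 0 → h r t = h r 0)
    (hstab : ∀ ε > (0:ℝ), ∃ δ > (0:ℝ), ∀ r, 0 ≤ r → r ≤ δ → h r 0 ≤ ε)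
    (hatt : ∀ r, ∀ ε > (0:ℝ), ∃ T : ℝ, ∀ t, T ≤ t → h r t ≤ ε) :
    ∃ β : ℝ → ℝ → ℝ, ClassKL β ∧ ∀ r t, 0 ≤ r → 0 ≤ t → h r t ≤ β r t := by
  classical
  have hglob : ∀ ρ s, h ρ s ≤ h ρ 0 := by
    intro ρ s
    rcases le_or_gt s 0 with hs|hs
    · rw [hneg ρ s hs]
    · exact hat ρ hs.le
  -- integrability of h in time
  have Ih : ∀ ρ a b, IntervalIntegrable (h ρ) MeasureTheory.volume a b :=
    fun ρ a b => (hat ρ).intervalIntegrable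
  -- the time-smoothed envelope
  set ht : ℝ → ℝ → ℝ := fun ρ t => ∫ s in (t-1)..t, h ρ s with hht
  have f1 : ∀ ρ t, h ρ t ≤ ht ρ t := by
    intro ρ t
    have hconst : (∫ s in (t-1)..t, (fun _ => h ρ t) s) = h ρ t := by
      simp
    rw [← hconst]
    exact integral_mono_on (by linarith) intervalIntegrable_const (Ih ρ _ _)
      (fun s hs => hat ρ hs.2)
  have f2 : ∀ ρ t, ht ρ t ≤ h ρ (t-1) := by
    intro ρ t
    have hconst : (∫ s in (t-1)..t, (fun _ => h ρ (t-1)) s) = h ρ (t-1) := by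
      simp
    rw [← hconst]
    exact integral_mono_on (by linarith) (Ih ρ _ _) intervalIntegrable_const
      (fun s hs => hat ρ hs.1)
  have f3 : ∀ ρ t, 0 ≤ ht ρ t :=
    fun ρ t => le_trans (h0 ρ t) (f1 ρ t)
  have f6 : ∀ ρ t, ht ρ t ≤ h ρ 0 :=
    fun ρ t => le_trans (f2 ρ t) (hglob ρ (t-1))
  have f4 : ∀ ρ, Antitone (fun t => ht ρ t) := by
    intro ρ t t' htt'
    simp only [hht]
    have hshift := integral_comp_add_right (a := t - 1) (b := t) (h ρ) (t' - t)
    rw [show t - 1 + (t' - t) = t' - 1 by ring, show t + (t' - t) = t' by ring] at hshift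
    rw [← hshift]
    refine integral_mono_on (by linarith) ?_ (Ih ρ _ _) ?_
    · exact ((hat ρ).comp_monotone (monotone_id.add_const (t' - t))).intervalIntegrable
    · exact fun s _ => hat ρ (by linarith)
  have f5 : ∀ t, Monotone (fun ρ => ht ρ t) := by
    intro t ρ₁ ρ₂ hρ
    exact integral_mono_on (by linarith) (Ih ρ₁ _ _) (Ih ρ₂ _ _)
      (fun s _ => hmr s hρ)
  have Iht : ∀ t a b, IntervalIntegrable (fun ρ => ht ρ t) MeasureTheory.volume a b :=
    fun t a b => (f5 t).intervalIntegrable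
  -- Lipschitz of ht in time
  have f7 : ∀ ρ t t', |ht ρ t - ht ρ t'| ≤ 2 * h ρ 0 * |t - t'| := by
    intro ρ t t'
    set P : ℝ → ℝ := fun y => ∫ s in (0:ℝ)..y, h ρ s with hP
    have hPid : ∀ u, ht ρ u = P u - P (u - 1) := by
      intro u
      rw [hP]
      simp only []
      rw [integral_interval_sub_left (Ih ρ 0 u) (Ih ρ 0 (u-1))]
    have Plip : ∀ y y', |P y - P y'| ≤ h ρ 0 * |y - y'| := by
      intro y y'
      have hsub : P y - P y' = ∫ s in y'..y, h ρ s := by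
        rw [hP]
        exact integral_interval_sub_left (Ih ρ 0 y) (Ih ρ 0 y')
      rw [hsub]
      have hbd : ∀ s ∈ Set.uIoc y' y, ‖h ρ s‖ ≤ h ρ 0 := by
        intro s _
        rw [Real.norm_eq_abs, abs_of_nonneg (h0 ρ s)]
        exact hglob ρ s
      have := intervalIntegral.norm_integral_le_of_norm_le_const hbd
      rw [Real.norm_eq_abs] at this
      exact this
    have e1 : ht ρ t - ht ρ t' = (P t - P t') - (P (t-1) - P (t'-1)) := by
      rw [hPid t, hPid t']; ring
    have h1 := Plip t t'
    have h2 := Plip (t-1) (t'-1)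
    rw [show (t-1) - (t'-1) = t - t' by ring] at h2
    have htri : |ht ρ t - ht ρ t'| ≤ |P t - P t'| + |P (t-1) - P (t'-1)| := by
      rw [e1]
      exact abs_sub _ _
    linarith
  -- the candidate KL function
  set β : ℝ → ℝ → ℝ := fun r t => r * Real.exp (-t) + (∫ ρ in r..(2*r), ht ρ t) / r
    with hβ
  clear_value β
  have hβ0 : ∀ t, β 0 t = 0 := by
    intro t; simp [hβ]
  -- basic bounds
  have hGnn : ∀ r t, 0 ≤ r → 0 ≤ (∫ ρ in r..(2*r), ht ρ t) / r := by
    intro r t hr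
    apply div_nonneg _ hr
    exact intervalIntegral.integral_nonneg (by linarith) (fun ρ _ => f3 ρ t)
  have hβnn : ∀ r t, 0 ≤ r → 0 ≤ β r t := by
    intro r t hr
    have := hGnn r t hr
    have : 0 ≤ r * Real.exp (-t) := by positivity
    simp only [hβ]
    nlinarith [hGnn r t hr]
  have hGlow : ∀ r t, 0 < r → ht r t ≤ (∫ ρ in r..(2*r), ht ρ t) / r := by
    intro r t hr
    rw [le_div_iff₀ hr]
    have hconst : (∫ ρ in r..(2*r), (fun _ => ht r t) ρ) = ht r t * r := by
      rw [intervalIntegral.integral_const, smul_eq_mul]; ring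
    rw [← hconst]
    exact integral_mono_on (by linarith) intervalIntegrable_const (Iht t _ _)
      (fun ρ hρ => f5 t hρ.1)
  have hGhigh : ∀ r t, 0 < r → (∫ ρ in r..(2*r), ht ρ t) / r ≤ ht (2*r) t := by
    intro r t hr
    rw [div_le_iff₀ hr]
    have hconst : (∫ ρ in r..(2*r), (fun _ => ht (2*r) t) ρ) = ht (2*r) t * r := by
      rw [intervalIntegral.integral_const, smul_eq_mul]; ring
    rw [← hconst]
    exact integral_mono_on (by linarith) (Iht t _ _) intervalIntegrable_const
      (fun ρ hρ => f5 t hρ.2)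
  -- the final bound
  have hbound : ∀ r t, 0 ≤ r → 0 ≤ t → h r t ≤ β r t := by
    intro r t hr htt
    rcases eq_or_lt_of_le hr with hr0|hr0
    · -- r = 0
      rw [← hr0, hβ0]
      have h00 : h 0 0 ≤ 0 := by
        by_contra hcon
        push_neg at hcon
        obtain ⟨δ, hδ, hs⟩ := hstab (h 0 0 / 2) (by linarith)
        have := hs 0 le_rfl hδ.le
        linarith
      calc h 0 t ≤ h 0 0 := hat 0 htt
        _ ≤ 0 := h00
    · have : h r t ≤ (∫ ρ in r..(2*r), ht ρ t) / r :=
        le_trans (f1 r t) (hGlow r t hr0)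
      have hpos : 0 ≤ r * Real.exp (-t) := by positivity
      simp only [hβ]; linarith
  refine ⟨β, ⟨?_, ?_⟩, hbound⟩
  · -- ClassK in r for each t ≥ 0
    intro t htt
    have hid : ∀ r : ℝ, β r t = r * Real.exp (-t) +
        ((∫ ρ in (0:ℝ)..(2*r), ht ρ t) - ∫ ρ in (0:ℝ)..r, ht ρ t) / r := by
      intro r
      rw [hβ]
      simp only []
      rw [integral_interval_sub_left (Iht t 0 (2*r)) (Iht t 0 r)]
    refine ⟨?_, ?_, hβ0 t, fun r hr => hβnn r t hr⟩
    · -- continuity in r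
      intro r hr
      rcases eq_or_lt_of_le (mem_Ici.1 hr) with hr0|hr0
      · -- at r = 0
        rw [ContinuousWithinAt, ← hr0, hβ0]
        rw [Metric.tendsto_nhdsWithin_nhds]
        intro ε hε
        obtain ⟨δ₅, hδ₅, hs⟩ := hstab (ε/4) (by linarith)
        refine ⟨min (ε/4) (δ₅/2), by positivity, ?_⟩
        intro ρ hρ hd
        rw [Real.dist_eq, sub_zero, abs_of_nonneg (mem_Ici.1 hρ)] at hd
        have hρ0 : 0 ≤ ρ := mem_Ici.1 hρ
        have hρε : ρ < ε/4 := lt_of_lt_of_le hd (min_le_left _ _)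
        have hρδ : 2*ρ ≤ δ₅ := by
          have := lt_of_lt_of_le hd (min_le_right _ _); linarith
        have hup : β ρ t ≤ ρ * Real.exp (-t) + h (2*ρ) 0 := by
          rcases eq_or_lt_of_le hρ0 with h1|h1
          · rw [← h1, hβ0]; simpa using h0 0 0
          · have := le_trans (hGhigh ρ t h1) (f6 (2*ρ) t)
            simp only [hβ]; linarith
        have hexp : Real.exp (-t) ≤ 1 := by
          rw [Real.exp_le_one_iff]; linarith
        have h3 : ρ * Real.exp (-t) ≤ ρ := mul_le_of_le_one_right hρ0 hexp
        have h4 : β ρ t ≤ ρ + ε/4 := by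
          have h2 := hs (2*ρ) (by linarith) hρδ
          linarith
        rw [Real.dist_eq, sub_zero, abs_of_nonneg (hβnn ρ t hρ0)]
        linarith
      · -- at r > 0
        apply ContinuousAt.continuousWithinAt
        have hQ : Continuous fun y => ∫ ρ in (0:ℝ)..y, ht ρ t :=
          intervalIntegral.continuous_primitive (fun a b => Iht t a b) 0
        have : ContinuousAt (fun r : ℝ => r * Real.exp (-t) +
            ((∫ ρ in (0:ℝ)..(2*r), ht ρ t) - ∫ ρ in (0:ℝ)..r, ht ρ t) / r) r := by
          apply ContinuousAt.add
          · fun_prop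
          · apply ContinuousAt.div
            · exact ((hQ.comp (continuous_const.mul continuous_id)).sub hQ).continuousAt
            · exact continuousAt_id
            · exact ne_of_gt hr0
        apply this.congr
        filter_upwards with ρ using (hid ρ).symm
    · -- strict monotonicity in r
      intro r₁ h₁ r₂ h₂ h₁₂
      rcases eq_or_lt_of_le (mem_Ici.1 h₁) with hr0|hr0
      · have hr0' : r₁ = 0 := hr0.symm
        subst hr0'
        show β 0 t < β r₂ t
        rw [hβ0]
        have h1 : 0 < r₂ * Real.exp (-t) := by positivity
        have h2 := hGnn r₂ t h₁₂.le
        simp only [hβ]; linarith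
      · show β r₁ t < β r₂ t
        have hexp : r₁ * Real.exp (-t) < r₂ * Real.exp (-t) := by
          have := Real.exp_pos (-t); nlinarith
        have hGmono : (∫ ρ in r₁..(2*r₁), ht ρ t) / r₁ ≤ (∫ ρ in r₂..(2*r₂), ht ρ t) / r₂ := by
          have e1 : (∫ ρ in r₁..(2*r₁), ht ρ t) / r₁ = ∫ u in (1:ℝ)..2, ht (r₁*u) t := by
            rw [integral_comp_mul_left (a := 1) (b := 2) (fun ρ => ht ρ t) (ne_of_gt hr0)]
            simp [smul_eq_mul, mul_one, div_eq_inv_mul, mul_comm]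
          have e2 : (∫ ρ in r₂..(2*r₂), ht ρ t) / r₂ = ∫ u in (1:ℝ)..2, ht (r₂*u) t := by
            rw [integral_comp_mul_left (a := 1) (b := 2) (fun ρ => ht ρ t)
              (ne_of_gt (lt_trans hr0 h₁₂))]
            simp [smul_eq_mul, mul_one, div_eq_inv_mul, mul_comm]
          rw [e1, e2]
          refine integral_mono_on (by norm_num) ?_ ?_ ?_
          · exact ((f5 t).comp (monotone_mul_left_of_nonneg hr0.le)).intervalIntegrable
          · exact ((f5 t).comp (monotone_mul_left_of_nonneg
              (le_trans hr0.le h₁₂.le))).intervalIntegrable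
          · intro u hu
            exact f5 t (mul_le_mul_of_nonneg_right h₁₂.le (by linarith [hu.1]))
        simp only [hβ]; linarith
  · -- properties in t for each r > 0
    intro r hr
    have hF : ∀ t, β r t = r * Real.exp (-t) + (∫ ρ in r..(2*r), ht ρ t) / r := fun t => by rw [hβ]
    have hFlip : ∀ t t', |(∫ ρ in r..(2*r), ht ρ t) / r - (∫ ρ in r..(2*r), ht ρ t') / r|
        ≤ (2 * h (2*r) 0) * |t - t'| := by
      intro t t'
      rw [div_sub_div_same, abs_div, abs_of_pos hr]
      rw [← integral_sub (Iht t r (2*r)) (Iht t' r (2*r))]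
      rw [div_le_iff₀ hr]
      have key : ‖∫ ρ in r..(2*r), (ht ρ t - ht ρ t')‖
          ≤ (2 * h (2*r) 0 * |t - t'|) * |2*r - r| := by
        apply intervalIntegral.norm_integral_le_of_norm_le_const
        intro ρ hρ
        have hρle : ρ ≤ 2*r := by
          rcases hρ with ⟨h1, h2⟩
          rw [max_eq_right (by linarith : r ≤ 2*r)] at h2
          exact h2
        have hf := f7 ρ t t'
        have hmono := hmr 0 hρle
        have habs : (0:ℝ) ≤ |t - t'| := abs_nonneg _
        rw [Real.norm_eq_abs]
        nlinarith
      rw [Real.norm_eq_abs, show |2*r - r| = r by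
        rw [show 2*r - r = r by ring, abs_of_pos hr]] at key
      linarith
    refine ⟨?_, ?_, ?_⟩
    · -- continuity in t
      apply Continuous.continuousOn
      rw [show (β r) = (fun t => r * Real.exp (-t) + (∫ ρ in r..(2*r), ht ρ t) / r)
        from funext hF]
      apply Continuous.add
      · fun_prop
      · apply LipschitzWith.continuous (K := Real.toNNReal (2 * h (2*r) 0))
        apply LipschitzWith.of_dist_le_mul
        intro t t'
        rw [Real.dist_eq, Real.dist_eq]
        calc |(∫ ρ in r..(2*r), ht ρ t) / r - (∫ ρ in r..(2*r), ht ρ t') / r|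
            ≤ (2 * h (2*r) 0) * |t - t'| := hFlip t t'
          _ ≤ (Real.toNNReal (2 * h (2*r) 0) : ℝ) * |t - t'| := by
              apply mul_le_mul_of_nonneg_right _ (abs_nonneg _)
              exact Real.le_coe_toNNReal _
    · -- antitone in t
      intro t _ t' _ htt'
      simp only [hβ]
      have h1 : r * Real.exp (-t') ≤ r * Real.exp (-t) := by
        have := Real.exp_le_exp.2 (neg_le_neg htt')
        nlinarith [Real.exp_pos (-t')]
      have h2 : (∫ ρ in r..(2*r), ht ρ t') / r ≤ (∫ ρ in r..(2*r), ht ρ t) / r := by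
        rw [div_le_div_iff_of_pos_right hr]
        exact integral_mono_on (by linarith) (Iht t' r (2*r)) (Iht t r (2*r))
          (fun ρ _ => f4 ρ htt')
      linarith
    · -- tendsto 0 at infinity
      have hexp : Tendsto (fun t => r * Real.exp (-t)) atTop (nhds 0) := by
        have := Real.tendsto_exp_neg_atTop_nhds_zero.const_mul r
        simpa using this
      have hupper : Tendsto (fun t => h (2*r) (t-1)) atTop (nhds 0) := by
        rw [Metric.tendsto_atTop]
        intro ε hε
        obtain ⟨T, hT⟩ := hatt (2*r) (ε/2) (by linarith)
        refine ⟨T + 1, fun t htT => ?_⟩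
        rw [Real.dist_eq, sub_zero, abs_of_nonneg (h0 (2*r) (t-1))]
        have := hT (t-1) (by linarith)
        linarith
      have hFt : Tendsto (fun t => (∫ ρ in r..(2*r), ht ρ t) / r) atTop (nhds 0) := by
        apply tendsto_of_tendsto_of_tendsto_of_le_of_le tendsto_const_nhds hupper
        · intro t; exact hGnn r t hr.le
        · intro t
          exact le_trans (hGhigh r t hr) (f2 (2*r) t)
      have hsum := hexp.add hFt
      rw [show (β r) = (fun t => r * Real.exp (-t) + (∫ ρ in r..(2*r), ht ρ t) / r)
        from funext hF]
      simpa using hsum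

end KL


/-- Non-coercive UGAS Lyapunov theorem: for a robustly forward complete system
with robust equilibrium, a non-coercive Lyapunov function implies UGAS. -/
theorem noncoercive_UGAS_lyapunov_theorem
    {X D : Type*} [NormedAddCommGroup X] (S : DynSys X D)
    (hRFC : S.RFC) (hREP : S.REP)
    (V : X → ℝ) (hVc : Continuous V) (hV0 : V 0 = 0)
    (ψ₂ α : ℝ → ℝ) (hψ₂ : ClassKInf ψ₂) (hα : ClassK α)
    (hpos : ∀ x : X, x ≠ 0 → 0 < V x)
    (hub : ∀ x : X, V x ≤ ψ₂ ‖x‖)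
    (hdec : ∀ (x : X) (d : D), dini (fun t => V (S.phi t x d)) 0 ≤ -α ‖x‖) :
    ∃ β : ℝ → ℝ → ℝ, ClassKL β ∧
      ∀ (x : X) (d : D) (t : ℝ), 0 ≤ t → ‖S.phi t x d‖ ≤ β ‖x‖ t := by
  classical
  set Φ : ℝ × X × D → ℝ := fun p => ‖S.phi p.1 p.2.1 p.2.2‖ with hΦ
  set A : ℝ → ℝ → Set ℝ :=
    fun r t => insert 0 (Φ '' {p : ℝ × X × D | t ≤ p.1 ∧ 0 ≤ p.1 ∧ ‖p.2.1‖ ≤ r}) with hA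
  set g : ℝ → ℝ → ℝ := fun r t => sSup (A r t) with hg
  have hAne : ∀ r t, (A r t).Nonempty := fun r t => ⟨0, mem_insert _ _⟩
  have hbddA : ∀ r t, BddAbove (A r t) := by
    intro r t
    obtain ⟨G, hG0, hG⟩ := bdd S hRFC hREP hVc hV0 hψ₂ hα hpos hub hdec (max r 1)
      (lt_of_lt_of_le one_pos (le_max_right _ _))
    refine ⟨G, ?_⟩
    rintro y (rfl|⟨p, hp, rfl⟩)
    · exact hG0
    · exact hG p.2.1 p.2.2 p.1 hp.2.1 (le_trans hp.2.2 (le_max_left _ _))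
  have hel : ∀ (x : X) (d : D) (t : ℝ), 0 ≤ t → ‖S.phi t x d‖ ≤ g ‖x‖ t := by
    intro x d t ht
    exact le_csSup (hbddA _ _) (mem_insert_of_mem _ ⟨(t, x, d), ⟨le_rfl, ht, le_rfl⟩, rfl⟩)
  have hg0 : ∀ r t, 0 ≤ g r t := fun r t => le_csSup (hbddA r t) (mem_insert _ _)
  have hmr : ∀ t, Monotone fun r => g r t := by
    intro t r₁ r₂ hr
    apply csSup_le_csSup (hbddA r₂ t) (hAne r₁ t)
    apply insert_subset_insert
    apply image_mono
    intro p hp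
    exact ⟨hp.1, hp.2.1, le_trans hp.2.2 hr⟩
  have hat : ∀ r, Antitone (g r) := by
    intro r t₁ t₂ ht
    apply csSup_le_csSup (hbddA r t₁) (hAne r t₂)
    apply insert_subset_insert
    apply image_mono
    intro p hp
    exact ⟨le_trans ht hp.1, hp.2.1, hp.2.2⟩
  have hneg : ∀ r t, t ≤ 0 → g r t = g r 0 := by
    intro r t ht
    have : A r t = A r 0 := by
      simp only [hA]
      congr 1
      apply congrArg
      ext p
      constructor
      · rintro ⟨h1, h2, h3⟩; exact ⟨h2, h2, h3⟩
      · rintro ⟨h1, h2, h3⟩; exact ⟨le_trans ht h2, h2, h3⟩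
    simp only [hg]
    rw [this]
  have hstab : ∀ ε > (0:ℝ), ∃ δ > (0:ℝ), ∀ r, 0 ≤ r → r ≤ δ → g r 0 ≤ ε := by
    intro ε hε
    obtain ⟨δ, hδ, hs⟩ := stab S hREP hVc hV0 hψ₂ hα hpos hub hdec ε hε
    refine ⟨δ, hδ, ?_⟩
    intro r hr hrδ
    apply csSup_le (hAne r 0)
    rintro y (rfl|⟨p, hp, rfl⟩)
    · exact hε.le
    · exact hs p.2.1 p.2.2 p.1 hp.2.1 (le_trans hp.2.2 hrδ)
  have hatt : ∀ r, ∀ ε > (0:ℝ), ∃ T : ℝ, ∀ t, T ≤ t → g r t ≤ ε := by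
    intro r ε hε
    rcases lt_or_ge r 0 with hr|hr
    · refine ⟨0, fun t ht => ?_⟩
      apply csSup_le (hAne r t)
      rintro y (rfl|⟨p, hp, rfl⟩)
      · exact hε.le
      · exact absurd (le_trans (norm_nonneg _) hp.2.2) (not_le.2 hr)
    · obtain ⟨θ, hθ, hU⟩ := UGATT S hREP hVc hV0 hψ₂ hα hpos hub hdec ε hε
      refine ⟨ψ₂ r / θ + 1, fun t ht => ?_⟩
      apply csSup_le (hAne r t)
      rintro y (rfl|⟨p, hp, rfl⟩)
      · exact hε.le
      · exact hU r hr p.2.1 p.2.2 p.1 hp.2.2 (le_trans ht hp.1)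
  obtain ⟨β, hKL, hb⟩ := KL_construction g hg0 hmr hat hneg hstab hatt
  exact ⟨β, hKL, fun x d t ht =>
    le_trans (hel x d t ht) (hb ‖x‖ t (norm_nonneg x) ht)⟩
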